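/- arXiv:2601.18902 — 2 statements merged into one kernel-verified Lean document; each statement's English description precedes it below -/
import Mathlib

section
/- Suppose (μ_p, σ_p²) ≠ (μ_q, σ_q²). Then the function g(τ) = (1/2)[log(σ_q²/σ_r²(τ)) + (σ_r²(τ) + (1−τ)²(μ_p−μ_q)²)/σ_q² − 1], with σ_r²(τ) = (1−τ)σ_p² + τσ_q² + τ²(1−τ)(μ_p−μ_q)², is strictly decreasing on (0,1); hence for every θ ∈ (0, g(0)) there is a unique τ* ∈ (0,1) with g(τ*) = θ. -/
open Set

noncomputable def vA (a b m τ : ℝ) : ℝ := (1 - τ) * a + τ * b + τ ^ 2 * (1 - τ) * m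

noncomputable def gA (a b m τ : ℝ) : ℝ :=
  (1 / 2) * (Real.log (b / vA a b m τ) + (vA a b m τ + (1 - τ) ^ 2 * m) / b - 1)

lemma vA_pos (a b m : ℝ) (ha : 0 < a) (hb : 0 < b) (hm : 0 ≤ m) {τ : ℝ}
    (h0 : 0 ≤ τ) (h1 : τ ≤ 1) : 0 < vA a b m τ := by
  unfold vA
  rcases lt_or_eq_of_le h1 with h | h
  · have h1' : 0 < (1 - τ) * a := mul_pos (by linarith) ha
    have h2' : 0 ≤ τ * b := mul_nonneg h0 hb.le
    have h3' : 0 ≤ τ ^ 2 * (1 - τ) * m :=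
      mul_nonneg (mul_nonneg (sq_nonneg τ) (by linarith)) hm
    linarith
  · subst h; simp; linarith

lemma gA_contOn (a b m : ℝ) (ha : 0 < a) (hb : 0 < b) (hm : 0 ≤ m) :
    ContinuousOn (gA a b m) (Icc 0 1) := by
  have hv : Continuous (vA a b m) := by unfold vA; continuity
  have hvne : ∀ x ∈ Icc (0:ℝ) 1, vA a b m x ≠ 0 :=
    fun x hx => (vA_pos a b m ha hb hm hx.1 hx.2).ne'
  unfold gA
  apply ContinuousOn.mul continuousOn_const
  apply ContinuousOn.sub _ continuousOn_const
  apply ContinuousOn.add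
  · apply ContinuousOn.log
    · exact continuousOn_const.div hv.continuousOn hvne
    · exact fun x hx => div_ne_zero hb.ne' (hvne x hx)
  · exact (hv.continuousOn.add (by fun_prop)).div_const b

lemma Pkey (a b m t : ℝ) (ha : 0 < a) (hb : 0 < b) (hm : 0 ≤ m)
    (ht0 : 0 < t) (ht1 : t < 1) (hnz : m ≠ 0 ∨ a ≠ b) :
    0 < (a - b + t^2*m)^2 + 2*(1-t)^2*m*(a - b + t^2*m) + 2*m*b := by
  by_cases hm0 : m = 0
  · subst hm0
    have hab : a ≠ b := hnz.resolve_left (by simp)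
    have h : a - b ≠ 0 := sub_ne_zero.mpr hab
    have : 0 < (a-b)^2 := by positivity
    nlinarith
  · have hmpos : 0 < m := hm.lt_of_ne' hm0
    have hs : 0 < 1 - t := by linarith
    rcases le_or_gt b (t^2*m + (1-t)^2*m) with hcase | hcase
    · have hx : t^2*m + (1-t)^2*m - b < a - b + t^2*m + (1-t)^2*m := by linarith
      have hM : 0 ≤ t^2*m + (1-t)^2*m - b := by linarith
      have hx2 : (t^2*m + (1-t)^2*m - b)^2 < (a - b + t^2*m + (1-t)^2*m)^2 := by
        have := mul_self_lt_mul_self hM hx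
        nlinarith [this]
      nlinarith [hx2, mul_pos hb hb, sq_nonneg (t^2*m), sq_nonneg (t*(1-t)*m),
        mul_nonneg (mul_nonneg (mul_nonneg hb.le hm) ht0.le) hs.le]
    · have h1 : m*(t^2*m + (1-t)^2*m) < m*b := mul_lt_mul_of_pos_left hcase hmpos
      have h2t : (0:ℝ) ≤ 2 - t := by linarith
      nlinarith [h1, sq_nonneg (a - b + t^2*m + (1-t)^2*m), sq_nonneg (m*t),
        mul_nonneg (mul_nonneg (sq_nonneg (m*(1-t))) ht0.le) h2t]

lemma gA_hasDeriv (a b m : ℝ) (ha : 0 < a) (hb : 0 < b) (hm : 0 ≤ m)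
    (hnz : m ≠ 0 ∨ a ≠ b) {τ : ℝ} (h0 : 0 < τ) (h1 : τ < 1) :
    ∃ D, HasDerivAt (gA a b m) D τ ∧ D < 0 := by
  have hvpos : 0 < vA a b m τ := vA_pos a b m ha hb hm h0.le h1.le
  have h1lin : HasDerivAt (fun x : ℝ => 1 - x) (-1) τ := by
    simpa using (hasDerivAt_id' τ).const_sub (1:ℝ)
  have hv : HasDerivAt (fun x => vA a b m x) (b - a + (2*τ - 3*τ^2)*m) τ := by
    have h2 : HasDerivAt (fun x : ℝ => x ^ 2) (2*τ) τ := by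
      simpa using hasDerivAt_pow 2 τ
    have := ((h1lin.mul_const a).add ((hasDerivAt_id τ).mul_const b)).add
      ((h2.mul h1lin).mul_const m)
    unfold vA
    refine this.congr_deriv ?_
    ring
  set v' : ℝ := b - a + (2*τ - 3*τ^2)*m with hv'def
  have hdiv : HasDerivAt (fun x => b / vA a b m x)
      ((0 * vA a b m τ - b * v') / (vA a b m τ)^2) τ :=
    (hasDerivAt_const τ b).div hv hvpos.ne'
  have hlog := hdiv.log (div_ne_zero hb.ne' hvpos.ne')
  have hsq : HasDerivAt (fun x : ℝ => (1-x)^2 * m) ((2:ℕ) * (1-τ)^(2-1) * (-1) * m) τ :=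
    (h1lin.pow 2).mul_const m
  have hquot := (hv.add hsq).div_const b
  have hsum := (hlog.add hquot).sub_const (1:ℝ)
  have hg := hsum.const_mul (1/2 : ℝ)
  refine ⟨_, hg, ?_⟩
  -- show the derivative value is negative
  have hP := Pkey a b m τ ha hb hm h0 h1 hnz
  set P : ℝ := (a - b + τ^2*m)^2 + 2*(1-τ)^2*m*(a - b + τ^2*m) + 2*m*b with hPdef
  have hval : (1/2 : ℝ) * ((0 * vA a b m τ - b * v') / (vA a b m τ)^2 / (b / vA a b m τ)
      + (v' + (2:ℕ) * (1-τ)^(2-1) * (-1) * m) / b)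
      = (-(1-τ) * P) / (2 * (vA a b m τ * b)) := by
    have hvne : (1-τ)*a + τ*b + τ^2*(1-τ)*m ≠ 0 := by
      have := hvpos.ne'; unfold vA at this; exact this
    rw [hPdef, hv'def]
    unfold vA
    field_simp
    ring
  rw [hval]
  apply div_neg_of_neg_of_pos
  · have : 0 < (1-τ) * P := mul_pos (by linarith) hP
    linarith
  · positivity

theorem auxMain (a b m : ℝ) (ha : 0 < a) (hb : 0 < b) (hm : 0 ≤ m)
    (hnz : m ≠ 0 ∨ a ≠ b) :
    StrictAntiOn (gA a b m) (Set.Ioo 0 1) ∧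
      ∀ θ ∈ Set.Ioo (0:ℝ) (gA a b m 0), ∃! τ, τ ∈ Set.Ioo (0:ℝ) 1 ∧ gA a b m τ = θ := by
  have hcont : ContinuousOn (gA a b m) (Icc 0 1) := gA_contOn a b m ha hb hm
  have hanti : StrictAntiOn (gA a b m) (Ioo 0 1) := by
    apply strictAntiOn_of_deriv_neg (convex_Ioo 0 1) (hcont.mono Ioo_subset_Icc_self)
    intro x hx
    rw [interior_Ioo] at hx
    obtain ⟨D, hD, hDneg⟩ := gA_hasDeriv a b m ha hb hm hnz hx.1 hx.2
    rwa [hD.deriv]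
  refine ⟨hanti, ?_⟩
  intro θ hθ
  have hg1 : gA a b m 1 = 0 := by
    unfold gA vA
    norm_num [div_self hb.ne']
  have hθ' : θ ∈ Ioo (gA a b m 1) (gA a b m 0) := by rw [hg1]; exact hθ
  obtain ⟨τ, hτ, hgτ⟩ := intermediate_value_Ioo' (by norm_num : (0:ℝ) ≤ 1) hcont hθ'
  exact ⟨τ, ⟨hτ, hgτ⟩, fun y hy => hanti.injOn hy.1 hτ (hy.2.trans hgτ.symm)⟩

theorem constraint_function_strictAnti_and_unique_solution
    (μp μq σp σq : ℝ) (hσp : 0 < σp) (hσq : 0 < σq)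
    (hne : (μp, σp ^ 2) ≠ (μq, σq ^ 2)) :
    let σr2 : ℝ → ℝ := fun τ =>
      (1 - τ) * σp ^ 2 + τ * σq ^ 2 + τ ^ 2 * (1 - τ) * (μp - μq) ^ 2
    let g : ℝ → ℝ := fun τ =>
      (1 / 2) * (Real.log (σq ^ 2 / σr2 τ)
        + (σr2 τ + (1 - τ) ^ 2 * (μp - μq) ^ 2) / σq ^ 2 - 1)
    StrictAntiOn g (Set.Ioo 0 1) ∧
    ∀ θ ∈ Set.Ioo (0 : ℝ) (g 0), ∃! τ, τ ∈ Set.Ioo (0 : ℝ) 1 ∧ g τ = θ := by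
  intro σr2 g
  have hnz : (μp - μq)^2 ≠ 0 ∨ σp^2 ≠ σq^2 := by
    rcases eq_or_ne μp μq with h | h
    · right; intro hab; exact hne (by rw [h, hab])
    · left; exact pow_ne_zero 2 (sub_ne_zero.mpr h)
  exact auxMain (σp^2) (σq^2) ((μp-μq)^2) (by positivity) (by positivity)
    (sq_nonneg _) hnz
end

section
/- Fix τ ∈ (0,1), Δ = μ_p − μ_q, σ_r² = (1−τ)σ_p² + τσ_q² + τ²(1−τ)Δ², and λ = (τσ_q²)/((1−τ)σ_r²). Then the variance stationarity condition (1/σ_r²) − (σ_p² + τ²Δ²)/σ_r⁴ + λ·(−1/σ_r² + 1/σ_q²) = 0 holds. -/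
theorem kkt_variance_stationarity
    (μp μq σp σq τ : ℝ) (hσp : 0 < σp) (hσq : 0 < σq)
    (hτ : τ ∈ Set.Ioo (0 : ℝ) 1) :
    let Δ : ℝ := μp - μq
    let σr2 : ℝ := (1 - τ) * σp ^ 2 + τ * σq ^ 2 + τ ^ 2 * (1 - τ) * Δ ^ 2
    let lam : ℝ := (τ * σq ^ 2) / ((1 - τ) * σr2)
    1 / σr2 - (σp ^ 2 + τ ^ 2 * Δ ^ 2) / σr2 ^ 2 + lam * (-(1 / σr2) + 1 / σq ^ 2) = 0 := by
  obtain ⟨hτ0, hτ1⟩ := hτ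
  intro Δ σr2 lam
  have h1 : (0:ℝ) < 1 - τ := by linarith
  have hσr2 : 0 < σr2 := by
    have := sq_nonneg Δ
    have := sq_nonneg σp
    have := sq_nonneg σq
    positivity
  have hq : σq ^ 2 ≠ 0 := by positivity
  simp only [lam]
  field_simp [lam, hσr2.ne', h1.ne']
  ring_nf
  simp only [σr2]
  ring
end
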